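/- The group Γ = ℤ² ⋉ ℤ[1/2], where each standard generator of ℤ² acts on the additive group ℤ[1/2] by multiplication by 2, is not isomorphic to any subgroup of Aff₊(ℝ). -/

import Mathlib

noncomputable section

/-- The additive group `ℤ[1/2]` of dyadic rationals, as an additive subgroup of `ℚ`. -/
def DyadicAddSubgroup : AddSubgroup ℚ where
  carrier := {q | ∃ (m : ℤ) (n : ℕ), q = m / 2 ^ n}
  zero_mem' := ⟨0, 0, by norm_num⟩
  add_mem' := by
    rintro a b ⟨m, n, rfl⟩ ⟨m', n', rfl⟩
    refine ⟨m * 2 ^ n' + m' * 2 ^ n, n + n', ?_⟩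
    have h1 : ((2 : ℚ) ^ n) ≠ 0 := by positivity
    have h2 : ((2 : ℚ) ^ n') ≠ 0 := by positivity
    push_cast
    rw [div_add_div _ _ h1 h2, pow_add]
    ring
  neg_mem' := by
    rintro a ⟨m, n, rfl⟩
    exact ⟨-m, n, by push_cast; ring⟩

/-- Doubling, as an automorphism of the additive group of dyadic rationals. -/
def doubling : ↥DyadicAddSubgroup ≃+ ↥DyadicAddSubgroup where
  toFun x := ⟨2 * (x : ℚ), by
    obtain ⟨m, n, h⟩ := x.2
    exact ⟨2 * m, n, by rw [h]; push_cast; ring⟩⟩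
  invFun x := ⟨(x : ℚ) / 2, by
    obtain ⟨m, n, h⟩ := x.2
    exact ⟨m, n + 1, by rw [h, pow_succ]; ring⟩⟩
  left_inv x := by ext; ring
  right_inv x := by ext; ring
  map_add' x y := by ext; push_cast; ring

/-- Doubling as a multiplicative automorphism of `Multiplicative ℤ[1/2]`. -/
def d2 : MulAut (Multiplicative ↥DyadicAddSubgroup) := AddEquiv.toMultiplicative doubling

/-- The action of `ℤ²` on `ℤ[1/2]` where each standard generator acts by
multiplication by `2`. -/
def phiBS : Multiplicative (ℤ × ℤ) →* MulAut (Multiplicative ↥DyadicAddSubgroup) :=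
  (zpowersHom _ d2).comp
    (AddMonoidHom.toMultiplicative (AddMonoidHom.fst ℤ ℤ + AddMonoidHom.snd ℤ ℤ))

/-- The group `Γ = ℤ² ⋉ ℤ[1/2]`. -/
abbrev GammaBS : Type := Multiplicative ↥DyadicAddSubgroup ⋊[phiBS] Multiplicative (ℤ × ℤ)

/-- `f : ℝ ≃o ℝ` is an orientation-preserving affine map `x ↦ a*x + b`, `a > 0`. -/
def IsAffinePos (f : ℝ ≃o ℝ) : Prop :=
  ∃ a b : ℝ, 0 < a ∧ ∀ x : ℝ, f x = a * x + b

-- auxiliary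
def dOne : ↥DyadicAddSubgroup := ⟨1, 1, 0, by norm_num⟩

def tBS : GammaBS := SemidirectProduct.inl (Multiplicative.ofAdd dOne)
def aBS : GammaBS := SemidirectProduct.inr (Multiplicative.ofAdd ((1, 0) : ℤ × ℤ))
def bBS : GammaBS := SemidirectProduct.inr (Multiplicative.ofAdd ((0, 1) : ℤ × ℤ))

lemma phiBS_a : phiBS (Multiplicative.ofAdd ((1, 0) : ℤ × ℤ)) = d2 := by
  simp [phiBS]

lemma phiBS_b : phiBS (Multiplicative.ofAdd ((0, 1) : ℤ × ℤ)) = d2 := by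
  simp [phiBS]

lemma d2_one : d2 (Multiplicative.ofAdd dOne) =
    Multiplicative.ofAdd dOne * Multiplicative.ofAdd dOne := by
  show Multiplicative.ofAdd (doubling dOne) = Multiplicative.ofAdd (dOne + dOne)
  congr 1
  ext
  show (2 : ℚ) * 1 = 1 + 1
  norm_num

lemma rel_a : aBS * tBS * aBS⁻¹ = tBS * tBS := by
  rw [aBS, tBS, ← map_inv, ← SemidirectProduct.inl_aut, phiBS_a, d2_one, map_mul]

lemma rel_b : bBS * tBS * bBS⁻¹ = tBS * tBS := by
  rw [bBS, tBS, ← map_inv, ← SemidirectProduct.inl_aut, phiBS_b, d2_one, map_mul]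

lemma comm_ab : aBS * bBS = bBS * aBS := by
  rw [aBS, bBS, ← MonoidHom.map_mul SemidirectProduct.inr, ← MonoidHom.map_mul SemidirectProduct.inr, mul_comm]

lemma t_ne_one : tBS ≠ 1 := by
  rw [tBS]
  intro h
  have := SemidirectProduct.inl_injective (φ := phiBS) (h.trans (map_one _).symm)
  have h2 : dOne = 0 := this
  have : (1 : ℚ) = 0 := congrArg Subtype.val h2
  norm_num at this

lemma ab_ne : aBS ≠ bBS := by
  rw [aBS, bBS]
  intro h
  have := SemidirectProduct.inr_injective (φ := phiBS) h
  have h2 : ((1,0) : ℤ × ℤ) = (0,1) := this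
  simp at h2

lemma affine_coeff {A B A' B' : ℝ} (h : ∀ x : ℝ, A * x + B = A' * x + B') :
    A = A' ∧ B = B' := by
  have h0 := h 0
  have h1 := h 1
  constructor <;> nlinarith [h0, h1]

/-- The group `Γ = ℤ² ⋉ ℤ[1/2]`, where each standard generator of `ℤ²`
acts on the additive group of dyadic rationals by multiplication by `2`, is not
isomorphic to any subgroup of `Aff₊(ℝ)`, the group of orientation-preserving affine maps
of the real line. -/
theorem gammaBS_not_affine :
    ¬ ∃ φ : GammaBS →* (ℝ ≃o ℝ),
        Function.Injective φ ∧ ∀ γ : GammaBS, IsAffinePos (φ γ) := by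
  rintro ⟨φ, hinj, haff⟩
  obtain ⟨At, Bt, hAt, ht⟩ := haff tBS
  obtain ⟨Aa, Ba, hAa, ha⟩ := haff aBS
  obtain ⟨Ab, Bb, hAb, hb⟩ := haff bBS
  set c : GammaBS := aBS * bBS⁻¹ with hc
  obtain ⟨Ac, Bc, hAc, hcf⟩ := haff c
  -- a * t = t * t * a
  have key : ∀ (u v : GammaBS) (Au Bu Av Bv : ℝ),
      (∀ x : ℝ, φ u x = Au * x + Bu) → (∀ x : ℝ, φ v x = Av * x + Bv) →
      ∀ x : ℝ, φ (u * v) x = Au * (Av * x + Bv) + Bu := by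
    intro u v Au Bu Av Bv hu hv x
    rw [map_mul]
    show φ u (φ v x) = _
    rw [hv, hu]
  -- relation a t a⁻¹ = t²  ⇒  a t = t t a
  have rel_a' : aBS * tBS = tBS * tBS * aBS := by
    rw [← rel_a]; group
  have rel_b' : bBS * tBS = tBS * tBS * bBS := by
    rw [← rel_b]; group
  -- evaluate
  have eq_a : ∀ x : ℝ, Aa * (At * x + Bt) + Ba = At * (At * (Aa * x + Ba) + Bt) + Bt := by
    intro x
    have h1 := key aBS tBS Aa Ba At Bt ha ht x
    have h2 := key (tBS * tBS) aBS (At * At) (At * Bt + Bt) Aa Ba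
      (fun y => by
        have := key tBS tBS At Bt At Bt ht ht y
        rw [this]; ring) ha x
    rw [rel_a'] at h1
    rw [h1] at h2
    linarith [h2]
  -- slope of t is 1
  have hAt1 : At = 1 := by
    have := affine_coeff (A := Aa * At) (B := Aa * Bt + Ba)
      (A' := At * At * Aa) (B' := At * At * Ba + At * Bt + Bt)
      (fun x => by have := eq_a x; nlinarith [eq_a x])
    have h := this.1
    have : At * (1 - At) = 0 := by nlinarith
    rcases mul_eq_zero.mp this with h' | h'
    · linarith
    · linarith
  have hBt : Bt ≠ 0 := by
    intro h
    apply t_ne_one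
    apply hinj
    rw [map_one]
    ext x
    rw [ht x, hAt1, h]
    simp
  have hAa2 : Aa = 2 := by
    have := affine_coeff (A := Aa * At) (B := Aa * Bt + Ba)
      (A' := At * At * Aa) (B' := At * At * Ba + At * Bt + Bt)
      (fun x => by nlinarith [eq_a x])
    have h := this.2
    rw [hAt1] at h
    have : Aa * Bt = 2 * Bt := by linarith
    exact mul_right_cancel₀ hBt this
  have eq_b : ∀ x : ℝ, Ab * (At * x + Bt) + Bb = At * (At * (Ab * x + Bb) + Bt) + Bt := by
    intro x
    have h1 := key bBS tBS Ab Bb At Bt hb ht x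
    have h2 := key (tBS * tBS) bBS (At * At) (At * Bt + Bt) Ab Bb
      (fun y => by
        have := key tBS tBS At Bt At Bt ht ht y
        rw [this]; ring) hb x
    rw [rel_b'] at h1
    rw [h1] at h2
    linarith [h2]
  have hAb2 : Ab = 2 := by
    have := affine_coeff (A := Ab * At) (B := Ab * Bt + Bb)
      (A' := At * At * Ab) (B' := At * At * Bb + At * Bt + Bt)
      (fun x => by nlinarith [eq_b x])
    have h := this.2
    rw [hAt1] at h
    have : Ab * Bt = 2 * Bt := by linarith
    exact mul_right_cancel₀ hBt this
  -- c * b = a ⇒ Ac * Ab = Aa ⇒ Ac = 1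
  have hcb : c * bBS = aBS := by rw [hc]; group
  have eq_c : ∀ x : ℝ, Ac * (Ab * x + Bb) + Bc = Aa * x + Ba := by
    intro x
    have h1 := key c bBS Ac Bc Ab Bb hcf hb x
    rw [hcb] at h1
    rw [ha x] at h1
    linarith
  have hAc1 : Ac = 1 := by
    have := affine_coeff (A := Ac * Ab) (B := Ac * Bb + Bc) (A' := Aa) (B' := Ba)
      (fun x => by nlinarith [eq_c x])
    have h := this.1
    rw [hAa2, hAb2] at h
    linarith
  -- a * c = c * a ⇒ Bc = 0
  have hac : aBS * c = c * aBS := by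
    have h1 : Commute aBS bBS := comm_ab
    have h2 : Commute aBS (aBS * bBS⁻¹) := (Commute.refl aBS).mul_right h1.inv_right
    rw [hc]
    exact h2
  have eq_ac : ∀ x : ℝ, Aa * (Ac * x + Bc) + Ba = Ac * (Aa * x + Ba) + Bc := by
    intro x
    have h1 := key aBS c Aa Ba Ac Bc ha hcf x
    have h2 := key c aBS Ac Bc Aa Ba hcf ha x
    rw [hac] at h1
    rw [h1] at h2
    linarith
  have hBc : Bc = 0 := by
    have := affine_coeff (A := Aa * Ac) (B := Aa * Bc + Ba)
      (A' := Ac * Aa) (B' := Ac * Ba + Bc)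
      (fun x => by nlinarith [eq_ac x])
    have h := this.2
    rw [hAa2, hAc1] at h
    linarith
  -- c = 1 contradiction
  have : c = 1 := by
    apply hinj
    rw [map_one]
    ext x
    rw [hcf x, hAc1, hBc]
    simp
  rw [hc, mul_inv_eq_one] at this
  exact ab_ne this

end
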